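/- arXiv:2208.09179 — 2 statements merged into one kernel-verified Lean document; each statement's English description precedes it below -/
import Mathlib

section
/- If a linear switched system (Σ_𝓜), associated with a bounded set 𝓜 of n×n real matrices, admits a nonstrict common Lyapunov function, then (Σ_𝓜) is uniformly stable. -/
open MeasureTheory Set
open scoped RealInnerProductSpace

noncomputable section

attribute [local instance] Matrix.normedAddCommGroup Matrix.normedSpace

local instance matrixMeasurableSpace {n : ℕ} :
    MeasurableSpace (Matrix (Fin n) (Fin n) ℝ) :=
  inferInstanceAs (MeasurableSpace (Fin n → Fin n → ℝ))

/-- The space of `n × n` real matrices. -/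
abbrev Mat (n : ℕ) := Matrix (Fin n) (Fin n) ℝ

/-- The state space `ℝⁿ` with its Euclidean structure. -/
abbrev Vec (n : ℕ) := EuclideanSpace ℝ (Fin n)

/-- Action of a matrix on a vector of Euclidean space. -/
def Mat.act {n : ℕ} (M : Mat n) (x : Vec n) : Vec n := Matrix.toEuclideanLin M x

/-- A switching law for the switched system `(Σ_𝓜)`: a measurable function taking values in `𝓜`. -/
def IsSwitchingLaw {n : ℕ} (𝓜 : Set (Mat n)) (A : ℝ → Mat n) : Prop :=
  Measurable A ∧ ∀ t, 0 ≤ t → A t ∈ 𝓜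

/-- `Φ` is the fundamental matrix `t ↦ Φ_A(t,0)` of the switching law `A`: the continuous
solution on `[0,∞)` of `Φ(t) = Id + ∫₀ᵗ A(s) Φ(s) ds`. -/
def IsFundamentalMatrix {n : ℕ} (A : ℝ → Mat n) (Φ : ℝ → Mat n) : Prop :=
  ContinuousOn Φ (Ici (0:ℝ)) ∧
  ∀ t, 0 ≤ t → Φ t = 1 + ∫ s in (0:ℝ)..t, A s * Φ s

/-- Uniform stability of the switched system `(Σ_𝓜)`. -/
def UniformlyStable {n : ℕ} (𝓜 : Set (Mat n)) : Prop :=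
  ∃ C > 0, ∀ A Φ : ℝ → Mat n, IsSwitchingLaw 𝓜 A → IsFundamentalMatrix A Φ →
    ∀ t, 0 ≤ t → ‖Φ t‖ ≤ C

/-- Uniform exponential stability of the switched system `(Σ_𝓜)`. -/
def UniformlyExpStable {n : ℕ} (𝓜 : Set (Mat n)) : Prop :=
  ∃ C > 0, ∃ γ > 0, ∀ A Φ : ℝ → Mat n, IsSwitchingLaw 𝓜 A → IsFundamentalMatrix A Φ →
    ∀ t, 0 ≤ t → ‖Φ t‖ ≤ C * Real.exp (-γ * t)

/-- A nonstrict common Lyapunov function for `(Σ_𝓜)`: continuous, nonnegative, positive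
definite, and non-increasing along every trajectory. -/
def IsNonstrictCLF {n : ℕ} (𝓜 : Set (Mat n)) (V : Vec n → ℝ) : Prop :=
  Continuous V ∧ (∀ x, 0 ≤ V x) ∧ V 0 = 0 ∧ (∀ x, x ≠ 0 → 0 < V x) ∧
  ∀ A Φ : ℝ → Mat n, IsSwitchingLaw 𝓜 A → IsFundamentalMatrix A Φ → ∀ x₀ : Vec n,
    AntitoneOn (fun t => V ((Φ t).act x₀)) (Ici 0)

/-- A (strict) common Lyapunov function for `(Σ_𝓜)`: a nonstrict one that is moreover
strictly decreasing along every nonzero trajectory. -/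
def IsCLF {n : ℕ} (𝓜 : Set (Mat n)) (V : Vec n → ℝ) : Prop :=
  IsNonstrictCLF 𝓜 V ∧
  ∀ A Φ : ℝ → Mat n, IsSwitchingLaw 𝓜 A → IsFundamentalMatrix A Φ → ∀ x₀ : Vec n, x₀ ≠ 0 →
    StrictAntiOn (fun t => V ((Φ t).act x₀)) (Ici 0)

/-- A universal class of Lyapunov functions. -/
def IsUniversalClass {n : ℕ} (P : Set (Vec n → ℝ)) : Prop :=
  ∀ 𝓜 : Set (Mat n), Bornology.IsBounded 𝓜 → UniformlyExpStable 𝓜 →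
    ∃ V ∈ P, IsCLF 𝓜 V

/-- `V` is absolutely homogeneous of degree `α`. -/
def AbsHomog {n : ℕ} (α : ℝ) (V : Vec n → ℝ) : Prop :=
  ∀ (lam : ℝ) (x : Vec n), V (lam • x) = |lam| ^ α * V x

/-- The subdifferential of a convex function. -/
def subdiff {n : ℕ} (V : Vec n → ℝ) (x : Vec n) : Set (Vec n) :=
  {l | ∀ y, ⟪l, y - x⟫ ≤ V y - V x}

lemma euclid_abs_apply_le_norm {n : ℕ} (v : Vec n) (i : Fin n) : |v i| ≤ ‖v‖ := by
  rw [EuclideanSpace.norm_eq]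
  have h1 : |v i| = Real.sqrt (‖v i‖ ^ 2) := by
    rw [Real.sqrt_sq_eq_abs, Real.norm_eq_abs, abs_abs]
  rw [h1]
  apply Real.sqrt_le_sqrt
  exact Finset.single_le_sum (f := fun j => ‖v j‖ ^ 2) (fun j _ => sq_nonneg _)
    (Finset.mem_univ i)

lemma Mat.act_continuous {n : ℕ} (x : Vec n) : Continuous fun M : Mat n => M.act x := by
  have : (fun M : Mat n => M.act x) =
      ((LinearMap.applyₗ x).comp
        (Matrix.toEuclideanLin : Mat n ≃ₗ[ℝ] (Vec n →ₗ[ℝ] Vec n)).toLinearMap :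
        Mat n →ₗ[ℝ] Vec n) := rfl
  rw [this]
  exact LinearMap.continuous_of_finiteDimensional _

lemma Mat.act_one {n : ℕ} (x : Vec n) : (1 : Mat n).act x = x := by
  rw [Mat.act, Matrix.toEuclideanLin_apply, Matrix.one_mulVec]

lemma Mat.act_smul {n : ℕ} (M : Mat n) (c : ℝ) (x : Vec n) :
    M.act (c • x) = c • M.act x :=
  map_smul (Matrix.toEuclideanLin M) c x

lemma Mat.act_single_apply {n : ℕ} (M : Mat n) (j i : Fin n) :
    (M.act (EuclideanSpace.single j 1)) i = M i j := by
  rw [Mat.act, Matrix.toEuclideanLin_apply, EuclideanSpace.ofLp_single,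
    Matrix.mulVec_single]
  show M i j * 1 = M i j
  rw [mul_one]

/-- If a linear switched system `(Σ_𝓜)`, associated with a bounded set `𝓜`
of `n × n` real matrices, admits a nonstrict common Lyapunov function, then `(Σ_𝓜)` is
uniformly stable. -/
theorem uniformlyStable_of_nonstrictCLF {n : ℕ} (hn : 1 ≤ n)
    (M : Set (Mat n)) (hM : Bornology.IsBounded M)
    (V : Vec n → ℝ) (hV : IsNonstrictCLF M V) :
    UniformlyStable M := by
  obtain ⟨hVc, hVnn, hV0, hVpos, hVmono⟩ := hV
  -- minimum of V on the unit sphere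
  have hsne : (Metric.sphere (0:Vec n) 1).Nonempty :=
    ⟨EuclideanSpace.single ⟨0, hn⟩ 1, by simp [EuclideanSpace.norm_single]⟩
  obtain ⟨z, hz, hzmin⟩ :=
    (isCompact_sphere (0:Vec n) 1).exists_isMinOn hsne hVc.continuousOn
  have hz1 : ‖z‖ = 1 := by simpa using hz
  have hmpos : 0 < V z := by
    apply hVpos
    intro h
    rw [h] at hz1
    simp at hz1
  -- choose δ
  obtain ⟨ε, hε, hball⟩ := Metric.continuousAt_iff.mp hVc.continuousAt (V z) hmpos
  set δ : ℝ := min (ε / 2) (1 / 2) with hδdef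
  have hδpos : 0 < δ := lt_min (by linarith) (by norm_num)
  have hδlt1 : δ < 1 := lt_of_le_of_lt (min_le_right _ _) (by norm_num)
  have hδsmall : ∀ x : Vec n, ‖x‖ ≤ δ → V x < V z := by
    intro x hx
    have hd : dist x 0 < ε := by
      rw [dist_zero_right]
      exact lt_of_le_of_lt hx (lt_of_le_of_lt (min_le_left _ _) (by linarith))
    have := hball hd
    rw [dist_eq_norm, hV0, sub_zero, Real.norm_eq_abs] at this
    exact lt_of_le_of_lt (le_abs_self _) this
  -- key: trajectories starting on the δ-sphere stay in the unit ball
  have key : ∀ A Φ : ℝ → Mat n, IsSwitchingLaw M A → IsFundamentalMatrix A Φ →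
      ∀ x₀ : Vec n, ‖x₀‖ = δ → ∀ t, 0 ≤ t → ‖(Φ t).act x₀‖ ≤ 1 := by
    intro A Φ hA hΦ x₀ hx₀ t ht
    by_contra hcon
    push_neg at hcon
    have hΦ0 : Φ 0 = 1 := by
      have := hΦ.2 0 le_rfl
      simpa [intervalIntegral.integral_same] using this
    have hg0 : ‖(Φ 0).act x₀‖ = δ := by rw [hΦ0, Mat.act_one, hx₀]
    have hgc : ContinuousOn (fun s => ‖(Φ s).act x₀‖) (Icc 0 t) := by
      apply ContinuousOn.norm
      exact (Mat.act_continuous x₀).comp_continuousOn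
        (hΦ.1.mono (Icc_subset_Ici_self))
    have h1mem : (1:ℝ) ∈ Icc (‖(Φ 0).act x₀‖) (‖(Φ t).act x₀‖) :=
      ⟨by rw [hg0]; exact le_of_lt hδlt1, le_of_lt hcon⟩
    obtain ⟨s, hs, hgs⟩ := intermediate_value_Icc ht hgc h1mem
    have hsph : (Φ s).act x₀ ∈ Metric.sphere (0:Vec n) 1 := by
      simp [mem_sphere_iff_norm, hgs]
    have hge : V z ≤ V ((Φ s).act x₀) := hzmin hsph
    have hle : V ((Φ s).act x₀) ≤ V ((Φ 0).act x₀) :=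
      hVmono A Φ hA hΦ x₀ (self_mem_Ici) (mem_Ici.mpr hs.1) hs.1
    have hlt : V ((Φ 0).act x₀) < V z := by
      rw [hΦ0, Mat.act_one]
      exact hδsmall x₀ (le_of_eq hx₀)
    linarith
  -- conclude
  refine ⟨1 / δ, by positivity, ?_⟩
  intro A Φ hA hΦ t ht
  rw [Matrix.norm_le_iff (by positivity)]
  intro i j
  set x₀ : Vec n := δ • EuclideanSpace.single j 1 with hx₀def
  have hx₀ : ‖x₀‖ = δ := by
    rw [hx₀def, norm_smul, EuclideanSpace.norm_single]
    simp [abs_of_pos hδpos]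
  have hb := key A Φ hA hΦ x₀ hx₀ t ht
  have hact : (Φ t).act x₀ = δ • (Φ t).act (EuclideanSpace.single j 1) := by
    rw [hx₀def, Mat.act_smul]
  have happly : ((Φ t).act x₀) i = δ * Φ t i j := by
    rw [hact]
    simp [Mat.act_single_apply]
  have hcomp : |((Φ t).act x₀) i| ≤ 1 :=
    le_trans (euclid_abs_apply_le_norm _ i) hb
  rw [happly, abs_mul, abs_of_pos hδpos] at hcomp
  rw [Real.norm_eq_abs, le_div_iff₀ hδpos]
  rw [mul_comm] at hcomp
  linarith


end
end

section
/- Let V: ℝⁿ → [0,∞) be convex and absolutely homogeneous of degree one, let (x_i)_{i∈ℕ} be a dense sequence in the unit sphere S^{n−1}, and for each i let l_i ∈ ∂V(x_i). Define W_i(x) = max_{j=1,…,i} |l_jᵀ x|. Then W_i(x) ≤ V(x) for all x ∈ ℝⁿ and all i, and the sequence (W_i) converges to V uniformly on S^{n−1}. -/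
open MeasureTheory Set
open scoped RealInnerProductSpace

noncomputable section

attribute [local instance] Matrix.normedAddCommGroup Matrix.normedSpace

/-- Let `V : ℝⁿ → [0,∞)` be convex, absolutely homogeneous of degree one,
`(x_i)` a dense sequence in the unit sphere and `l_i ∈ ∂V(x_i)`. Then the polyhedral
functions `W_i(x) = max_{j ≤ i} |l_jᵀ x|` satisfy `W_i ≤ V` and converge to `V` uniformly
on the unit sphere. -/
theorem polyhedral_approx_of_dense {n : ℕ} (hn : 1 ≤ n) (V : Vec n → ℝ)
    (hconv : ConvexOn ℝ univ V) (hnonneg : ∀ x, 0 ≤ V x) (hhom : AbsHomog 1 V)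
    (x : ℕ → Vec n) (hx : ∀ i, ‖x i‖ = 1)
    (hdense : ∀ y : Vec n, ‖y‖ = 1 → y ∈ closure (Set.range x))
    (l : ℕ → Vec n) (hl : ∀ i, l i ∈ subdiff V (x i)) :
    (∀ (i : ℕ) (y : Vec n),
      ((Finset.range (i + 1)).sup' (by simp) fun j => |⟪l j, y⟫|) ≤ V y) ∧
    TendstoUniformlyOn
      (fun (i : ℕ) (y : Vec n) => (Finset.range (i + 1)).sup' (by simp) fun j => |⟪l j, y⟫|)
      V Filter.atTop (Metric.sphere (0 : Vec n) 1) := by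
  simp only [subdiff, Set.mem_setOf_eq] at hl
  have hV0 : V 0 = 0 := by
    have h := hhom 0 0; simpa using h
  have hVneg : ∀ y : Vec n, V (-y) = V y := by
    intro y; have h := hhom (-1) y; simpa using h
  have hsmul : ∀ (c : ℝ) (y : Vec n), 0 ≤ c → V (c • y) = c * V y := by
    intro c y hc
    have h := hhom c y
    rwa [abs_of_nonneg hc, Real.rpow_one] at h
  -- ⟪l j, x j⟫ = V (x j)
  have hkey : ∀ j, ⟪l j, x j⟫ = V (x j) := by
    intro j
    have h1 := hl j 0
    rw [zero_sub, inner_neg_right, hV0] at h1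
    have h2 := hl j ((2:ℝ) • x j)
    have h2' : ((2:ℝ) • x j) - x j = x j := by
      rw [two_smul]; abel
    rw [h2', hsmul 2 (x j) (by norm_num)] at h2
    linarith
  -- the fundamental bound |⟪l j, y⟫| ≤ V y
  have hbound : ∀ (j : ℕ) (y : Vec n), |⟪l j, y⟫| ≤ V y := by
    intro j y
    have h1 := hl j y
    rw [inner_sub_right, hkey j] at h1
    have h2 := hl j (-y)
    rw [inner_sub_right, hkey j, inner_neg_right, hVneg] at h2
    exact abs_le.mpr ⟨by linarith, by linarith⟩
  refine ⟨fun i y => Finset.sup'_le _ _ fun j _ => hbound j y, ?_⟩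
  -- continuity and linear bound
  have hcont : Continuous V := by
    have h := hconv.continuousOn isOpen_univ
    exact continuousOn_univ.mp h
  obtain ⟨C, hC⟩ := (isCompact_sphere (0 : Vec n) 1).exists_bound_of_continuousOn
    hcont.continuousOn
  set L : ℝ := max C 1 with hLdef
  have hL1 : (1:ℝ) ≤ L := le_max_right _ _
  have hLpos : 0 < L := lt_of_lt_of_le one_pos hL1
  have hVle : ∀ y : Vec n, V y ≤ L * ‖y‖ := by
    intro y
    rcases eq_or_ne y 0 with rfl | hy
    · simp [hV0]
    · have hny : (0:ℝ) < ‖y‖ := norm_pos_iff.mpr hy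
      set u : Vec n := ‖y‖⁻¹ • y with hu
      have hun : u ∈ Metric.sphere (0 : Vec n) 1 := by
        simp [hu, mem_sphere_zero_iff_norm, norm_smul, abs_of_pos (inv_pos.mpr hny),
          inv_mul_cancel₀ hny.ne']
      have hVu : V u ≤ L := le_trans (le_trans (le_abs_self _) (hC u hun)) (le_max_left _ _)
      have : V y = ‖y‖ * V u := by
        rw [hu, ← hsmul ‖y‖ _ hny.le, smul_smul, mul_inv_cancel₀ hny.ne', one_smul]
      rw [this, mul_comm]
      exact mul_le_mul_of_nonneg_right hVu hny.le
  have hlnorm : ∀ j, ‖l j‖ ≤ L := by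
    intro j
    rcases eq_or_ne (l j) 0 with h0 | h0
    · rw [h0]; simpa using hLpos.le
    · have h := le_trans (le_trans (le_abs_self _) (hbound j (l j))) (hVle (l j))
      rw [real_inner_self_eq_norm_mul_norm] at h
      have hn : (0:ℝ) < ‖l j‖ := norm_pos_iff.mpr h0
      exact le_of_mul_le_mul_right (by linarith) hn
  -- subadditivity and Lipschitz bound for V
  have hsubadd : ∀ a b : Vec n, V (a + b) ≤ V a + V b := by
    intro a b
    have h := hconv.2 (Set.mem_univ a) (Set.mem_univ b)
      (by norm_num : (0:ℝ) ≤ 1/2) (by norm_num : (0:ℝ) ≤ 1/2) (by norm_num)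
    have he : (1/2 : ℝ) • a + (1/2 : ℝ) • b = (1/2 : ℝ) • (a + b) := by
      rw [smul_add]
    rw [he, hsmul (1/2) (a+b) (by norm_num)] at h
    simp only [smul_eq_mul] at h
    linarith
  have hLip : ∀ a b : Vec n, V a - V b ≤ L * ‖a - b‖ := by
    intro a b
    have h := hsubadd b (a - b)
    rw [add_sub_cancel] at h
    have := hVle (a - b)
    linarith
  -- uniform convergence
  rw [Metric.tendstoUniformlyOn_iff]
  intro ε hε
  set δ : ℝ := ε / (3 * L) with hδdef
  have hδpos : 0 < δ := div_pos hε (by linarith)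
  have hcover : Metric.sphere (0 : Vec n) 1 ⊆ ⋃ j : ℕ, Metric.ball (x j) δ := by
    intro y hy
    have hy1 : ‖y‖ = 1 := by simpa [mem_sphere_zero_iff_norm] using hy
    obtain ⟨b, hb, hbd⟩ := Metric.mem_closure_iff.mp (hdense y hy1) δ hδpos
    obtain ⟨j, rfl⟩ := hb
    exact Set.mem_iUnion.mpr ⟨j, by simpa [Metric.mem_ball] using hbd⟩
  obtain ⟨J, hJ⟩ := (isCompact_sphere (0 : Vec n) 1).elim_finite_subcover
    (fun j : ℕ => Metric.ball (x j) δ) (fun j => Metric.isOpen_ball) hcover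
  refine Filter.eventually_atTop.mpr ⟨J.sup id, fun i hi y hy => ?_⟩
  obtain ⟨j, hjJ, hjy⟩ := Set.mem_iUnion₂.mp (hJ hy)
  have hji : j ∈ Finset.range (i + 1) := by
    have : j ≤ J.sup id := Finset.le_sup (f := id) hjJ
    exact Finset.mem_range.mpr (Nat.lt_succ_of_le (le_trans this hi))
  have hdist : ‖y - x j‖ < δ := by
    rw [← dist_eq_norm]; exact hjy
  -- lower bound on ⟪l j, y⟫
  have h1 : ⟪l j, y⟫ = ⟪l j, x j⟫ + ⟪l j, y - x j⟫ := by
    rw [inner_sub_right]; ring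
  have h2 : -(L * δ) ≤ ⟪l j, y - x j⟫ := by
    have := abs_real_inner_le_norm (l j) (y - x j)
    have hmul : ‖l j‖ * ‖y - x j‖ ≤ L * δ :=
      mul_le_mul (hlnorm j) hdist.le (norm_nonneg _) hLpos.le
    have := abs_le.mp (le_trans this hmul)
    exact this.1
  have h3 : V y - L * δ ≤ V (x j) := by
    have := hLip y (x j)
    have hmul : L * ‖y - x j‖ ≤ L * δ := mul_le_mul_of_nonneg_left hdist.le hLpos.le
    linarith
  have h4 : V y - 2 * (L * δ) ≤ ⟪l j, y⟫ := by
    rw [h1, hkey j]; linarith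
  have h5 : V y - 2 * (L * δ) ≤
      (Finset.range (i + 1)).sup' (by simp) fun j => |⟪l j, y⟫| :=
    le_trans (le_trans h4 (le_abs_self _)) (Finset.le_sup' (fun k => |⟪l k, y⟫|) hji)
  have h6 : ((Finset.range (i + 1)).sup' (by simp) fun j => |⟪l j, y⟫|) ≤ V y :=
    Finset.sup'_le _ _ fun j _ => hbound j y
  have hLδ : L * δ = ε / 3 := by
    field_simp [hδdef]
    rw [hδdef]; field_simp [hLpos.ne']
  rw [Real.dist_eq, abs_of_nonneg (by linarith)]
  rw [hLδ] at h5
  linarith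

end
end
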